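/- arXiv:2508.12606 — 4 statements merged into one kernel-verified Lean document; each statement's English description precedes it below -/
import Mathlib

section
/- Let X, Y and Z be integrable real random variables with pairwise distinct, strictly increasing continuous cdfs such that X ≼_cx Y ≼_cx Z, and suppose each pair of cdfs has a unique crossing point: d_XY for (F_X, F_Y), d_XZ for (F_X, F_Z), and d_YZ for (F_Y, F_Z). Then d_XZ lies weakly between the other two crossing points, i.e. min{d_XY, d_YZ} ≤ d_XZ ≤ max{d_XY, d_YZ}. -/
open MeasureTheory ProbabilityTheory

/-- `d` is a crossing point of the cdfs `F` and `G`, where `F` is the cdf of the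
convex-order-smaller variable: `F ≤ G` before `d` and `F ≥ G` after `d`. -/
def IsCrossPt (F G : ℝ → ℝ) (d : ℝ) : Prop :=
  (∀ x ≤ d, F x ≤ G x) ∧ ∀ x ≥ d, G x ≤ F x

/-- `d` is the unique crossing point of the cdfs `F` and `G`. -/
def IsUniqueCrossPt (F G : ℝ → ℝ) (d : ℝ) : Prop :=
  IsCrossPt F G d ∧ ∀ d', IsCrossPt F G d' → d' = d

/-- Under the convex-order setup with unique pairwise crossing points,
`d_XZ` lies weakly between `d_XY` and `d_YZ`. -/
theorem crossing_point_between {Ω : Type*} [MeasureSpace Ω]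
    (hP : IsProbabilityMeasure (ℙ : Measure Ω))
    (X Y Z : Ω → ℝ) (hXm : Measurable X) (hYm : Measurable Y) (hZm : Measurable Z)
    (hXi : Integrable X) (hYi : Integrable Y) (hZi : Integrable Z)
    (FX FY FZ : ℝ → ℝ)
    (hFX : ∀ x, FX x = cdf ((ℙ : Measure Ω).map X) x)
    (hFY : ∀ x, FY x = cdf ((ℙ : Measure Ω).map Y) x)
    (hFZ : ∀ x, FZ x = cdf ((ℙ : Measure Ω).map Z) x)
    (hXs : StrictMono FX) (hXc : Continuous FX)
    (hYs : StrictMono FY) (hYc : Continuous FY)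
    (hZs : StrictMono FZ) (hZc : Continuous FZ)
    (hne₁ : FX ≠ FY) (hne₂ : FX ≠ FZ) (hne₃ : FY ≠ FZ)
    (hmeanXY : (∫ ω, X ω) = ∫ ω, Y ω)
    (hslXY : ∀ x : ℝ, (∫ ω, max (X ω - x) 0) ≤ ∫ ω, max (Y ω - x) 0)
    (hmeanYZ : (∫ ω, Y ω) = ∫ ω, Z ω)
    (hslYZ : ∀ x : ℝ, (∫ ω, max (Y ω - x) 0) ≤ ∫ ω, max (Z ω - x) 0)
    (dXY dXZ dYZ : ℝ)
    (hXY : IsUniqueCrossPt FX FY dXY)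
    (hXZ : IsUniqueCrossPt FX FZ dXZ)
    (hYZ : IsUniqueCrossPt FY FZ dYZ) :
    min dXY dYZ ≤ dXZ ∧ dXZ ≤ max dXY dYZ := by
  constructor
  · by_contra h
    push_neg at h
    set m := min dXY dYZ with hm
    have hd1 : dXZ < m := h
    set d' := (dXZ + m) / 2 with hd'
    have h1 : dXZ < d' := by simp only [hd']; linarith
    have h2 : d' < m := by simp only [hd']; linarith
    have heq : ∀ x, dXZ < x → x < m → FX x = FZ x := by
      intro x hx1 hx2
      have hXY' : FX x ≤ FY x := hXY.1.1 x (le_of_lt (lt_of_lt_of_le hx2 (min_le_left _ _)))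
      have hYZ' : FY x ≤ FZ x := hYZ.1.1 x (le_of_lt (lt_of_lt_of_le hx2 (min_le_right _ _)))
      have hZX' : FZ x ≤ FX x := hXZ.1.2 x (le_of_lt hx1)
      linarith
    have hcross : IsCrossPt FX FZ d' := by
      constructor
      · intro x hx
        rcases le_or_gt x dXZ with hle | hlt
        · exact hXZ.1.1 x hle
        · exact le_of_eq (heq x hlt (lt_of_le_of_lt hx h2))
      · intro x hx
        exact hXZ.1.2 x (le_of_lt (lt_of_lt_of_le h1 hx))
    have := hXZ.2 d' hcross
    linarith
  · by_contra h
    push_neg at h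
    set m := max dXY dYZ with hm
    have hd1 : m < dXZ := h
    set d' := (m + dXZ) / 2 with hd'
    have h1 : m < d' := by simp only [hd']; linarith
    have h2 : d' < dXZ := by simp only [hd']; linarith
    have heq : ∀ x, m < x → x < dXZ → FX x = FZ x := by
      intro x hx1 hx2
      have hYX' : FY x ≤ FX x := hXY.1.2 x (le_of_lt (lt_of_le_of_lt (le_max_left _ _) hx1))
      have hZY' : FZ x ≤ FY x := hYZ.1.2 x (le_of_lt (lt_of_le_of_lt (le_max_right _ _) hx1))
      have hXZ' : FX x ≤ FZ x := hXZ.1.1 x (le_of_lt hx2)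
      linarith
    have hcross : IsCrossPt FX FZ d' := by
      constructor
      · intro x hx
        exact hXZ.1.1 x (le_of_lt (lt_of_le_of_lt hx h2))
      · intro x hx
        rcases le_or_gt dXZ x with hle | hlt
        · exact hXZ.1.2 x hle
        · exact ge_of_eq (heq x (lt_of_lt_of_le h1 hx) hlt)
    have := hXZ.2 d' hcross
    linarith
end

section
/- Let I_1 and I_2 be integrable real random variables with strictly increasing continuous cdfs such that I_2 ≼_DISP I_1. Then every real number d satisfying F_{I^c}(d) = F_{I^{cm}}(d), where I^c and I^{cm} are the comonotonic and countermonotonic differences, satisfies F_{I^{cm}}(d) = 1/2; consequently d = F_{I_1}^{-1}(1/2) − F_{I_2}^{-1}(1/2). -/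
open MeasureTheory ProbabilityTheory Set

private lemma aux_cont (F Finv : ℝ → ℝ) (hF : StrictMono F)
    (hFinv : ∀ p ∈ Ioo (0:ℝ) 1, F (Finv p) = p) {p : ℝ} (hp : p ∈ Ioo (0:ℝ) 1)
    {ε : ℝ} (hε : 0 < ε) :
    ∃ δ > 0, ∀ q ∈ Ioo (0:ℝ) 1, |q - p| < δ → |Finv q - Finv p| < ε := by
  have h1 : F (Finv p - ε) < p := by
    have := hF (show Finv p - ε < Finv p by linarith)
    rwa [hFinv p hp] at this
  have h2 : p < F (Finv p + ε) := by
    have := hF (show Finv p < Finv p + ε by linarith)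
    rwa [hFinv p hp] at this
  refine ⟨min (p - F (Finv p - ε)) (F (Finv p + ε) - p),
    lt_min (by linarith) (by linarith), fun q hq hqp => ?_⟩
  rw [abs_sub_lt_iff] at hqp ⊢
  obtain ⟨hqp1, hqp2⟩ := hqp
  have hlt := lt_of_lt_of_le hqp1 (min_le_right _ _)
  have hgt := lt_of_lt_of_le hqp2 (min_le_left _ _)
  have hA : F (Finv q) < F (Finv p + ε) := by rw [hFinv q hq]; linarith
  have hB : F (Finv p - ε) < F (Finv q) := by rw [hFinv q hq]; linarith
  have hA' := hF.lt_iff_lt.mp hA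
  have hB' := hF.lt_iff_lt.mp hB
  constructor <;> linarith

private lemma aux_cross (f : ℝ → ℝ) (α d : ℝ) (hα : α ∈ Ioo (0:ℝ) 1)
    (hle : ∀ p ∈ Ioo (0:ℝ) 1, p < α → f p ≤ d)
    (hgt : ∀ p ∈ Ioo (0:ℝ) 1, α < p → d < f p)
    (hcont : ∀ ε > (0:ℝ), ∃ δ > 0, ∀ q ∈ Ioo (0:ℝ) 1, |q - α| < δ → |f q - f α| < ε) :
    f α = d := by
  obtain ⟨hα0, hα1⟩ := hα
  by_contra hne
  rcases lt_or_gt_of_ne hne with hlt | hgt'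
  · obtain ⟨δ, hδ, hδ'⟩ := hcont (d - f α) (by linarith)
    have hmin : 0 < min (δ/2) ((1-α)/2) := lt_min (by linarith) (by linarith)
    have hmin1 := min_le_left (δ/2) ((1-α)/2)
    have hmin2 := min_le_right (δ/2) ((1-α)/2)
    set q := α + min (δ/2) ((1-α)/2) with hqdef
    have hq1 : q ∈ Ioo (0:ℝ) 1 := ⟨by simp only [hqdef]; linarith, by simp only [hqdef]; linarith⟩
    have habs : |q - α| < δ := by
      rw [abs_of_pos (by simp only [hqdef]; linarith)]
      simp only [hqdef]; linarith
    have := hδ' q hq1 habs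
    have := hgt q hq1 (by simp only [hqdef]; linarith)
    rw [abs_sub_lt_iff] at *
    linarith [this]
  · obtain ⟨δ, hδ, hδ'⟩ := hcont (f α - d) (by linarith)
    have hmin : 0 < min (δ/2) (α/2) := lt_min (by linarith) (by linarith)
    have hmin1 := min_le_left (δ/2) (α/2)
    have hmin2 := min_le_right (δ/2) (α/2)
    set q := α - min (δ/2) (α/2) with hqdef
    have hq1 : q ∈ Ioo (0:ℝ) 1 := ⟨by simp only [hqdef]; linarith, by simp only [hqdef]; linarith⟩
    have habs : |q - α| < δ := by
      rw [abs_of_nonpos (by simp only [hqdef]; linarith)]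
      simp only [hqdef]; linarith
    have h1 := hδ' q hq1 habs
    have h2 := hle q hq1 (by simp only [hqdef]; linarith)
    rw [abs_sub_lt_iff] at h1
    linarith [h1.2]

private lemma aux_level (f : ℝ → ℝ)
    (hmono : MonotoneOn f (Ioo (0:ℝ) 1)) (d α : ℝ)
    (hα : α = (volume (f ⁻¹' Iic d ∩ Ioo (0:ℝ) 1)).toReal) :
    (∀ p ∈ Ioo (0:ℝ) 1, p < α → f p ≤ d) ∧ (∀ p ∈ Ioo (0:ℝ) 1, α < p → d < f p) := by
  set A := f ⁻¹' Iic d ∩ Ioo (0:ℝ) 1 with hA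
  have hAfin : volume A ≠ ⊤ := by
    refine ne_top_of_le_ne_top ?_ (measure_mono inter_subset_right)
    simp [Real.volume_Ioo]
  constructor
  · intro p hp hpα
    by_contra hc
    push_neg at hc
    -- A ⊆ Ioo 0 p
    have hsub : A ⊆ Ioo 0 p := by
      rintro q ⟨hq1, hq2⟩
      refine ⟨hq2.1, ?_⟩
      by_contra hqp
      push_neg at hqp
      have := hmono hp hq2 hqp
      simp only [mem_preimage, mem_Iic] at hq1
      linarith
    have hle : volume A ≤ ENNReal.ofReal p := by
      calc volume A ≤ volume (Ioo 0 p) := measure_mono hsub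
        _ = ENNReal.ofReal p := by simp [Real.volume_Ioo]
    have : α ≤ p := by
      rw [hα, ← ENNReal.toReal_ofReal hp.1.le]
      exact ENNReal.toReal_mono ENNReal.ofReal_ne_top hle
    linarith
  · intro p hp hαp
    by_contra hc
    push_neg at hc
    have hsub : Ioo (0:ℝ) p ⊆ A := by
      rintro q ⟨hq1, hq2⟩
      have hq : q ∈ Ioo (0:ℝ) 1 := ⟨hq1, lt_trans hq2 hp.2⟩
      exact ⟨by simp only [mem_preimage, mem_Iic]; linarith [hmono hq hp hq2.le], hq⟩
    have hle : ENNReal.ofReal p ≤ volume A := by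
      calc ENNReal.ofReal p = volume (Ioo (0:ℝ) p) := by simp [Real.volume_Ioo]
        _ ≤ volume A := measure_mono hsub
    have : p ≤ α := by
      rw [hα, ← ENNReal.toReal_ofReal hp.1.le]
      exact ENNReal.toReal_mono hAfin hle
    linarith
/-- If `I₂ ≼_DISP I₁`, then every real `d` with
`F_{I^c}(d) = F_{I^{cm}}(d)` satisfies `F_{I^{cm}}(d) = 1/2`, and consequently
`d = F_{I₁}⁻¹(1/2) - F_{I₂}⁻¹(1/2)`. -/
theorem dispersive_crossing_level_half {Ω : Type*} [MeasureSpace Ω]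
    (hP : IsProbabilityMeasure (ℙ : Measure Ω))
    (I₁ I₂ : Ω → ℝ) (h₁m : Measurable I₁) (h₂m : Measurable I₂)
    (h₁i : Integrable I₁) (h₂i : Integrable I₂)
    (h₁s : StrictMono fun x => cdf ((ℙ : Measure Ω).map I₁) x)
    (h₁c : Continuous fun x => cdf ((ℙ : Measure Ω).map I₁) x)
    (h₂s : StrictMono fun x => cdf ((ℙ : Measure Ω).map I₂) x)
    (h₂c : Continuous fun x => cdf ((ℙ : Measure Ω).map I₂) x)
    (Finv₁ Finv₂ : ℝ → ℝ) (hFinv₁m : Measurable Finv₁) (hFinv₂m : Measurable Finv₂)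
    (hFinv₁ : ∀ p ∈ Set.Ioo (0 : ℝ) 1, cdf ((ℙ : Measure Ω).map I₁) (Finv₁ p) = p)
    (hFinv₂ : ∀ p ∈ Set.Ioo (0 : ℝ) 1, cdf ((ℙ : Measure Ω).map I₂) (Finv₂ p) = p)
    (hdisp : MonotoneOn (fun p => Finv₁ p - Finv₂ p) (Set.Ioo (0 : ℝ) 1))
    (U : Ω → ℝ) (hUm : Measurable U)
    (hU : (ℙ : Measure Ω).map U = volume.restrict (Set.Ioo (0 : ℝ) 1))
    (Fc Fcm : ℝ → ℝ)
    (hFc : Fc = fun x =>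
      cdf ((ℙ : Measure Ω).map fun ω => Finv₁ (U ω) - Finv₂ (U ω)) x)
    (hFcm : Fcm = fun x =>
      cdf ((ℙ : Measure Ω).map fun ω => Finv₁ (U ω) - Finv₂ (1 - U ω)) x)
    (d : ℝ) (hd : Fc d = Fcm d) :
    Fcm d = 1 / 2 ∧ d = Finv₁ (1 / 2) - Finv₂ (1 / 2) := by
  set F₁ : ℝ → ℝ := fun x => cdf ((ℙ : Measure Ω).map I₁) x with hF₁def
  set F₂ : ℝ → ℝ := fun x => cdf ((ℙ : Measure Ω).map I₂) x with hF₂def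
  have hFinv₁' : ∀ p ∈ Set.Ioo (0:ℝ) 1, F₁ (Finv₁ p) = p := hFinv₁
  have hFinv₂' : ∀ p ∈ Set.Ioo (0:ℝ) 1, F₂ (Finv₂ p) = p := hFinv₂
  -- basic bounds on the cdfs
  have hF₁pos : ∀ x, 0 < F₁ x := fun x =>
    lt_of_le_of_lt (cdf_nonneg _ (x - 1)) (h₁s (by linarith))
  have hF₁lt1 : ∀ x, F₁ x < 1 := fun x =>
    lt_of_lt_of_le (h₁s (lt_add_one x)) (cdf_le_one _ _)
  -- the two difference functions
  set g : ℝ → ℝ := fun p => Finv₁ p - Finv₂ p with hgdef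
  set h : ℝ → ℝ := fun p => Finv₁ p - Finv₂ (1 - p) with hhdef
  have hg_meas : Measurable g := hFinv₁m.sub hFinv₂m
  have hh_meas : Measurable h :=
    hFinv₁m.sub (hFinv₂m.comp (measurable_const.sub measurable_id))
  -- monotonicity of Finv's derived from strict monotonicity of the cdfs
  have hFinv₁mono : ∀ p ∈ Set.Ioo (0:ℝ) 1, ∀ q ∈ Set.Ioo (0:ℝ) 1, p ≤ q → Finv₁ p ≤ Finv₁ q := by
    intro p hp q hq hpq
    by_contra hc
    push_neg at hc
    have := h₁s hc
    rw [hFinv₁' q hq, hFinv₁' p hp] at this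
    linarith
  have hFinv₂mono : ∀ p ∈ Set.Ioo (0:ℝ) 1, ∀ q ∈ Set.Ioo (0:ℝ) 1, p ≤ q → Finv₂ p ≤ Finv₂ q := by
    intro p hp q hq hpq
    by_contra hc
    push_neg at hc
    have := h₂s hc
    rw [hFinv₂' q hq, hFinv₂' p hp] at this
    linarith
  have hFinv₂smono : ∀ p ∈ Set.Ioo (0:ℝ) 1, ∀ q ∈ Set.Ioo (0:ℝ) 1, p < q → Finv₂ p < Finv₂ q := by
    intro p hp q hq hpq
    rcases lt_or_ge (Finv₂ p) (Finv₂ q) with hc | hc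
    · exact hc
    · have := h₂s.monotone hc
      rw [hFinv₂' q hq, hFinv₂' p hp] at this
      linarith
  have hh_mono : MonotoneOn h (Set.Ioo (0:ℝ) 1) := by
    intro p hp q hq hpq
    have h1 := hFinv₁mono p hp q hq hpq
    have h1p : (1:ℝ) - p ∈ Set.Ioo (0:ℝ) 1 := ⟨by linarith [hp.2], by linarith [hp.1]⟩
    have h1q : (1:ℝ) - q ∈ Set.Ioo (0:ℝ) 1 := ⟨by linarith [hq.2], by linarith [hq.1]⟩
    have h2 := hFinv₂mono (1 - q) h1q (1 - p) h1p (by linarith)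
    simp only [hhdef]
    linarith
  -- compute Fc d and Fcm d as Lebesgue measures of sublevel sets
  have hmapc : (ℙ : Measure Ω).map (fun ω => Finv₁ (U ω) - Finv₂ (U ω))
      = (volume.restrict (Set.Ioo (0:ℝ) 1)).map g := by
    rw [← hU, Measure.map_map hg_meas hUm]
    rfl
  have hmapcm : (ℙ : Measure Ω).map (fun ω => Finv₁ (U ω) - Finv₂ (1 - U ω))
      = (volume.restrict (Set.Ioo (0:ℝ) 1)).map h := by
    rw [← hU, Measure.map_map hh_meas hUm]
    rfl
  haveI hpc : IsProbabilityMeasure ((ℙ : Measure Ω).map (fun ω => Finv₁ (U ω) - Finv₂ (U ω))) :=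
    Measure.isProbabilityMeasure_map ((hg_meas.comp hUm).aemeasurable)
  haveI hpcm : IsProbabilityMeasure
      ((ℙ : Measure Ω).map (fun ω => Finv₁ (U ω) - Finv₂ (1 - U ω))) :=
    Measure.isProbabilityMeasure_map ((hh_meas.comp hUm).aemeasurable)
  have hFc' : Fc d = (volume (g ⁻¹' Set.Iic d ∩ Set.Ioo (0:ℝ) 1)).toReal := by
    rw [hFc]
    simp only
    rw [cdf_eq_real, measureReal_def, hmapc, Measure.map_apply hg_meas measurableSet_Iic,
      Measure.restrict_apply (hg_meas measurableSet_Iic)]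
  have hFcm' : Fcm d = (volume (h ⁻¹' Set.Iic d ∩ Set.Ioo (0:ℝ) 1)).toReal := by
    rw [hFcm]
    simp only
    rw [cdf_eq_real, measureReal_def, hmapcm, Measure.map_apply hh_meas measurableSet_Iic,
      Measure.restrict_apply (hh_meas measurableSet_Iic)]
  set α : ℝ := Fc d with hαdef
  obtain ⟨hg_le, hg_gt⟩ := aux_level g hdisp d α hFc'
  obtain ⟨hh_le, hh_gt⟩ := aux_level h hh_mono d α (hd.trans hFcm')
  have hhalf : (1:ℝ)/2 ∈ Set.Ioo (0:ℝ) 1 := ⟨by norm_num, by norm_num⟩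
  -- α ∈ (0,1)
  have hα0 : 0 < α := by
    by_contra hc
    push_neg at hc
    set c := d + Finv₂ (1/2) with hcdef
    set p := min (1/2) (F₁ c) / 2 with hpdef
    have hp0 : 0 < p := by
      have := hF₁pos c
      simp only [hpdef]
      positivity
    have hple : p ≤ 1/4 := by
      have := min_le_left (1/2 : ℝ) (F₁ c)
      simp only [hpdef]; linarith
    have hp : p ∈ Set.Ioo (0:ℝ) 1 := ⟨hp0, by linarith⟩
    have hd_lt := hh_gt p hp (by linarith)
    -- Finv₁ p < c
    have h1 : Finv₁ p < c := by
      have hlt : F₁ (Finv₁ p) < F₁ c := by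
        rw [hFinv₁' p hp]
        have := min_le_right (1/2 : ℝ) (F₁ c)
        have := hF₁pos c
        simp only [hpdef]
        rcases min_cases (1/2 : ℝ) (F₁ c) with ⟨he, hle'⟩ | ⟨he, hle'⟩ <;> rw [he] <;> linarith
      exact h₁s.lt_iff_lt.mp hlt
    rw [hcdef] at h1
    -- Finv₂ (1/2) < Finv₂ (1 - p)
    have h1p : (1:ℝ) - p ∈ Set.Ioo (0:ℝ) 1 := ⟨by linarith, by linarith⟩
    have h2 : Finv₂ (1/2) < Finv₂ (1 - p) := hFinv₂smono _ hhalf _ h1p (by linarith)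
    have : h p < d := by simp only [hhdef]; linarith
    linarith
  have hα1 : α < 1 := by
    by_contra hc
    push_neg at hc
    set c := d + Finv₂ (1/2) with hcdef
    set p := (max (1/2) (F₁ c) + 1) / 2 with hpdef
    have hmax1 : max (1/2 : ℝ) (F₁ c) < 1 := max_lt (by norm_num) (hF₁lt1 c)
    have hmaxge : (1/2 : ℝ) ≤ max (1/2 : ℝ) (F₁ c) := le_max_left _ _
    have hp : p ∈ Set.Ioo (0:ℝ) 1 := ⟨by simp only [hpdef]; linarith, by simp only [hpdef]; linarith⟩
    have hle' := hh_le p hp (by linarith [hp.2])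
    have h1 : c < Finv₁ p := by
      have hlt : F₁ c < F₁ (Finv₁ p) := by
        rw [hFinv₁' p hp]
        have := le_max_right (1/2 : ℝ) (F₁ c)
        simp only [hpdef]
        linarith
      exact h₁s.lt_iff_lt.mp hlt
    rw [hcdef] at h1
    have h1p : (1:ℝ) - p ∈ Set.Ioo (0:ℝ) 1 := ⟨by linarith [hp.2], by linarith [hp.1]⟩
    have h2 : Finv₂ (1 - p) < Finv₂ (1/2) := by
      refine hFinv₂smono _ h1p _ hhalf ?_
      simp only [hpdef]; linarith
    have : d < h p := by simp only [hhdef]; linarith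
    linarith
  have hαIoo : α ∈ Set.Ioo (0:ℝ) 1 := ⟨hα0, hα1⟩
  -- continuity statements for g and h at α
  have hgcont : ∀ ε > (0:ℝ), ∃ δ > 0, ∀ q ∈ Set.Ioo (0:ℝ) 1, |q - α| < δ → |g q - g α| < ε := by
    intro ε hε
    obtain ⟨δ₁, hδ₁, hc1⟩ := aux_cont F₁ Finv₁ h₁s hFinv₁' hαIoo (half_pos hε)
    obtain ⟨δ₂, hδ₂, hc2⟩ := aux_cont F₂ Finv₂ h₂s hFinv₂' hαIoo (half_pos hε)
    refine ⟨min δ₁ δ₂, lt_min hδ₁ hδ₂, fun q hq hqα => ?_⟩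
    have e1 := hc1 q hq (lt_of_lt_of_le hqα (min_le_left _ _))
    have e2 := hc2 q hq (lt_of_lt_of_le hqα (min_le_right _ _))
    have : g q - g α = (Finv₁ q - Finv₁ α) - (Finv₂ q - Finv₂ α) := by
      simp only [hgdef]; ring
    rw [this]
    calc |(Finv₁ q - Finv₁ α) - (Finv₂ q - Finv₂ α)|
        ≤ |Finv₁ q - Finv₁ α| + |Finv₂ q - Finv₂ α| := abs_sub _ _
      _ < ε / 2 + ε / 2 := add_lt_add e1 e2
      _ = ε := by ring
  have h1α : (1:ℝ) - α ∈ Set.Ioo (0:ℝ) 1 := ⟨by linarith, by linarith⟩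
  have hhcont : ∀ ε > (0:ℝ), ∃ δ > 0, ∀ q ∈ Set.Ioo (0:ℝ) 1, |q - α| < δ → |h q - h α| < ε := by
    intro ε hε
    obtain ⟨δ₁, hδ₁, hc1⟩ := aux_cont F₁ Finv₁ h₁s hFinv₁' hαIoo (half_pos hε)
    obtain ⟨δ₂, hδ₂, hc2⟩ := aux_cont F₂ Finv₂ h₂s hFinv₂' h1α (half_pos hε)
    refine ⟨min δ₁ δ₂, lt_min hδ₁ hδ₂, fun q hq hqα => ?_⟩
    have e1 := hc1 q hq (lt_of_lt_of_le hqα (min_le_left _ _))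
    have h1q : (1:ℝ) - q ∈ Set.Ioo (0:ℝ) 1 := ⟨by linarith [hq.2], by linarith [hq.1]⟩
    have habs : |(1 - q) - (1 - α)| < min δ₁ δ₂ := by
      have : (1 - q) - (1 - α) = -(q - α) := by ring
      rw [this, abs_neg]
      exact hqα
    have e2 := hc2 (1 - q) h1q (lt_of_lt_of_le habs (min_le_right _ _))
    have : h q - h α = (Finv₁ q - Finv₁ α) - (Finv₂ (1 - q) - Finv₂ (1 - α)) := by
      simp only [hhdef]; ring
    rw [this]
    calc |(Finv₁ q - Finv₁ α) - (Finv₂ (1 - q) - Finv₂ (1 - α))|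
        ≤ |Finv₁ q - Finv₁ α| + |Finv₂ (1 - q) - Finv₂ (1 - α)| := abs_sub _ _
      _ < ε / 2 + ε / 2 := add_lt_add e1 e2
      _ = ε := by ring
  have hgα : g α = d := aux_cross g α d hαIoo hg_le hg_gt hgcont
  have hhα : h α = d := aux_cross h α d hαIoo hh_le hh_gt hhcont
  -- Finv₂ (1 - α) = Finv₂ α hence α = 1/2
  have heq : Finv₂ (1 - α) = Finv₂ α := by
    simp only [hgdef, hhdef] at hgα hhα
    linarith
  have hαhalf : α = 1/2 := by
    have : F₂ (Finv₂ (1 - α)) = F₂ (Finv₂ α) := by rw [heq]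
    rw [hFinv₂' _ h1α, hFinv₂' _ hαIoo] at this
    linarith
  constructor
  · rw [← hd]; exact hαhalf
  · have : g (1/2) = d := by rw [← hαhalf]; exact hgα
    simp only [hgdef] at this
    linarith
end

section
/- Let X, Y and Z be integrable real random variables with strictly increasing continuous cdfs such that X ≼_cx Y ≼_cx Z, and suppose d_XY is the unique crossing point of (F_X, F_Y) and d_YZ is the unique crossing point of (F_Y, F_Z). If max{d_XY, d_YZ} ≤ δ < ε, then E[r(X)] ≤ E[r(Y)] ≤ E[r(Z)], where r(x) = (x−δ)_+ − (x−ε)_+. -/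
open MeasureTheory ProbabilityTheory

/-- Layer-cake representation of the expected payoff. -/
lemma payoff_repr {Ω : Type*} [MeasureSpace Ω]
    (hP : IsProbabilityMeasure (ℙ : Measure Ω))
    (X : Ω → ℝ) (hXm : Measurable X) (hXi : Integrable X) (δ ε : ℝ) (hδε : δ < ε) :
    (∫ ω, (max (X ω - δ) 0 - max (X ω - ε) 0)) =
      (∫⁻ t in Set.Ioi (0:ℝ), ℙ {ω | t < ε - δ ∧ δ + t < X ω}).toReal := by
  set r : Ω → ℝ := fun ω => max (X ω - δ) 0 - max (X ω - ε) 0 with hr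
  have hr_nn : ∀ ω, 0 ≤ r ω := by
    intro ω
    simp only [hr, sub_nonneg]
    exact max_le_max (by linarith) le_rfl
  have hri : Integrable r :=
    ((hXi.sub (integrable_const δ)).pos_part).sub ((hXi.sub (integrable_const ε)).pos_part)
  have key := lintegral_eq_lintegral_meas_lt (ℙ : Measure Ω)
    (ae_of_all _ hr_nn) (by fun_prop : AEMeasurable r)
  rw [integral_eq_lintegral_of_nonneg_ae (ae_of_all _ hr_nn) hri.aestronglyMeasurable, key]
  congr 1
  refine setLIntegral_congr_fun measurableSet_Ioi (fun t ht => ?_)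
  have ht' : (0:ℝ) < t := ht
  congr 1
  ext ω
  simp only [Set.mem_setOf_eq, hr]
  constructor
  · intro h
    rcases max_cases (X ω - δ) (0:ℝ) with ⟨he, hge⟩ | ⟨he, hge⟩
    · rw [he] at h
      have h1 : X ω - ε ≤ max (X ω - ε) 0 := le_max_left _ _
      have h2 : (0:ℝ) ≤ max (X ω - ε) 0 := le_max_right _ _
      exact ⟨by linarith, by linarith⟩
    · rw [he] at h
      have h2 : (0:ℝ) ≤ max (X ω - ε) 0 := le_max_right _ _
      exact absurd ht' (by linarith)
  · rintro ⟨h1, h2⟩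
    have ha : max (X ω - δ) 0 = X ω - δ := max_eq_left (by linarith)
    rcases le_total (X ω) ε with hc | hc
    · have hb : max (X ω - ε) 0 = 0 := max_eq_right (by linarith)
      rw [ha, hb]; linarith
    · have hb : max (X ω - ε) 0 = X ω - ε := max_eq_left (by linarith)
      rw [ha, hb]; linarith

/-- One half of the comparison: if `F_Y ≤ F_X` on `[δ, ∞)` then `E[r(X)] ≤ E[r(Y)]`. -/
lemma payoff_half {Ω : Type*} [MeasureSpace Ω]
    (hP : IsProbabilityMeasure (ℙ : Measure Ω))
    (X Y : Ω → ℝ) (hXm : Measurable X) (hYm : Measurable Y)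
    (hXi : Integrable X) (hYi : Integrable Y)
    (FX FY : ℝ → ℝ)
    (hFX : ∀ x, FX x = cdf ((ℙ : Measure Ω).map X) x)
    (hFY : ∀ x, FY x = cdf ((ℙ : Measure Ω).map Y) x)
    (δ ε : ℝ) (hδε : δ < ε) (h : ∀ s, δ ≤ s → FY s ≤ FX s) :
    (∫ ω, (max (X ω - δ) 0 - max (X ω - ε) 0)) ≤
      (∫ ω, (max (Y ω - δ) 0 - max (Y ω - ε) 0)) := by
  rw [payoff_repr hP X hXm hXi δ ε hδε, payoff_repr hP Y hYm hYi δ ε hδε]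
  have hmono : (∫⁻ t in Set.Ioi (0:ℝ), ℙ {ω | t < ε - δ ∧ δ + t < X ω}) ≤
      ∫⁻ t in Set.Ioi (0:ℝ), ℙ {ω | t < ε - δ ∧ δ + t < Y ω} := by
    refine lintegral_mono_ae ?_
    filter_upwards [ae_restrict_mem measurableSet_Ioi] with t ht0
    have ht0' : (0:ℝ) < t := ht0
    by_cases hte : t < ε - δ
    · have hXset : {ω | t < ε - δ ∧ δ + t < X ω} = (X ⁻¹' Set.Iic (δ + t))ᶜ := by
        ext ω; simp [hte, not_le]
      have hYset : {ω | t < ε - δ ∧ δ + t < Y ω} = (Y ⁻¹' Set.Iic (δ + t))ᶜ := by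
        ext ω; simp [hte, not_le]
      rw [hXset, hYset,
        prob_compl_eq_one_sub (hXm measurableSet_Iic),
        prob_compl_eq_one_sub (hYm measurableSet_Iic)]
      refine tsub_le_tsub_left ?_ 1
      have hcdf : FY (δ + t) ≤ FX (δ + t) := h _ (by linarith)
      have hmX : IsProbabilityMeasure ((ℙ : Measure Ω).map X) :=
        Measure.isProbabilityMeasure_map hXm.aemeasurable
      have hmY : IsProbabilityMeasure ((ℙ : Measure Ω).map Y) :=
        Measure.isProbabilityMeasure_map hYm.aemeasurable
      have hX' : ENNReal.ofReal (FX (δ + t)) = (ℙ : Measure Ω).map X (Set.Iic (δ + t)) := by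
        rw [hFX]; exact ofReal_cdf _ _
      have hY' : ENNReal.ofReal (FY (δ + t)) = (ℙ : Measure Ω).map Y (Set.Iic (δ + t)) := by
        rw [hFY]; exact ofReal_cdf _ _
      rw [Measure.map_apply hXm measurableSet_Iic] at hX'
      rw [Measure.map_apply hYm measurableSet_Iic] at hY'
      rw [← hX', ← hY']
      exact ENNReal.ofReal_le_ofReal hcdf
    · have : {ω | t < ε - δ ∧ δ + t < X ω} = ∅ := by
        ext ω; simp only [Set.mem_setOf_eq, Set.mem_empty_iff_false, iff_false]
        rintro ⟨h1, _⟩; exact hte h1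
      rw [this]; simp
  have hb : ∀ t : ℝ, ℙ {ω | t < ε - δ ∧ δ + t < Y ω} ≤
      (Set.Iio (ε - δ)).indicator (fun _ => (1 : ENNReal)) t := by
    intro t
    by_cases ht : t < ε - δ
    · rw [Set.indicator_of_mem (Set.mem_Iio.mpr ht)]
      exact prob_le_one
    · have he : {ω | t < ε - δ ∧ δ + t < Y ω} = ∅ := by
        ext ω
        simp only [Set.mem_setOf_eq, Set.mem_empty_iff_false, iff_false]
        rintro ⟨h1, _⟩; exact ht h1
      simp [he]
  have hfin : (∫⁻ t in Set.Ioi (0:ℝ), ℙ {ω | t < ε - δ ∧ δ + t < Y ω}) ≠ ⊤ := by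
    refine ne_top_of_le_ne_top ?_ (lintegral_mono hb)
    rw [lintegral_indicator measurableSet_Iio]
    rw [Measure.restrict_restrict measurableSet_Iio, setLIntegral_one]
    rw [Set.Iio_inter_Ioi]
    simp [Real.volume_Ioo]
  exact ENNReal.toReal_mono hfin hmono

/-- If `X ≼_cx Y ≼_cx Z` have strictly increasing continuous cdfs with
unique crossing points `d_XY` of `(F_X, F_Y)` and `d_YZ` of `(F_Y, F_Z)`, and
`max {d_XY, d_YZ} ≤ δ < ε`, then `E[r(X)] ≤ E[r(Y)] ≤ E[r(Z)]` for
`r(x) = (x-δ)₊ - (x-ε)₊`. -/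
theorem payoff_order_above_crossings {Ω : Type*} [MeasureSpace Ω]
    (hP : IsProbabilityMeasure (ℙ : Measure Ω))
    (X Y Z : Ω → ℝ) (hXm : Measurable X) (hYm : Measurable Y) (hZm : Measurable Z)
    (hXi : Integrable X) (hYi : Integrable Y) (hZi : Integrable Z)
    (FX FY FZ : ℝ → ℝ)
    (hFX : ∀ x, FX x = cdf ((ℙ : Measure Ω).map X) x)
    (hFY : ∀ x, FY x = cdf ((ℙ : Measure Ω).map Y) x)
    (hFZ : ∀ x, FZ x = cdf ((ℙ : Measure Ω).map Z) x)
    (hXs : StrictMono FX) (hXc : Continuous FX)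
    (hYs : StrictMono FY) (hYc : Continuous FY)
    (hZs : StrictMono FZ) (hZc : Continuous FZ)
    (hmeanXY : (∫ ω, X ω) = ∫ ω, Y ω)
    (hslXY : ∀ x : ℝ, (∫ ω, max (X ω - x) 0) ≤ ∫ ω, max (Y ω - x) 0)
    (hmeanYZ : (∫ ω, Y ω) = ∫ ω, Z ω)
    (hslYZ : ∀ x : ℝ, (∫ ω, max (Y ω - x) 0) ≤ ∫ ω, max (Z ω - x) 0)
    (dXY dYZ : ℝ)
    (hXY : IsCrossPt FX FY dXY ∧ ∀ d', IsCrossPt FX FY d' → d' = dXY)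
    (hYZ : IsCrossPt FY FZ dYZ ∧ ∀ d', IsCrossPt FY FZ d' → d' = dYZ)
    (δ ε : ℝ) (hδ : max dXY dYZ ≤ δ) (hδε : δ < ε) :
    (∫ ω, (max (X ω - δ) 0 - max (X ω - ε) 0)) ≤
        (∫ ω, (max (Y ω - δ) 0 - max (Y ω - ε) 0)) ∧
      (∫ ω, (max (Y ω - δ) 0 - max (Y ω - ε) 0)) ≤
        ∫ ω, (max (Z ω - δ) 0 - max (Z ω - ε) 0) := by
  constructor
  · exact payoff_half hP X Y hXm hYm hXi hYi FX FY hFX hFY δ ε hδε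
      (fun s hs => hXY.1.2 s (le_trans (le_trans (le_max_left _ _) hδ) hs))
  · exact payoff_half hP Y Z hYm hZm hYi hZi FY FZ hFY hFZ δ ε hδε
      (fun s hs => hYZ.1.2 s (le_trans (le_trans (le_max_right _ _) hδ) hs))
end

section
/- Let X, Y and Z be integrable real random variables with strictly increasing continuous cdfs such that X ≼_cx Y ≼_cx Z, and suppose d_XY is the unique crossing point of (F_X, F_Y) and d_YZ is the unique crossing point of (F_Y, F_Z). If δ < ε ≤ min{d_XY, d_YZ}, then E[r(Z)] ≤ E[r(Y)] ≤ E[r(X)], where r(x) = (x−δ)_+ − (x−ε)_+. -/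
open MeasureTheory ProbabilityTheory

private lemma payoff_le_aux {Ω : Type*} [MeasureSpace Ω]
    (hP : IsProbabilityMeasure (ℙ : Measure Ω))
    (V W : Ω → ℝ) (hVi : Integrable V) (hWi : Integrable W)
    (δ ε : ℝ) (hδε : δ < ε)
    (h : ∀ s, δ ≤ s → s ≤ ε → (ℙ : Measure Ω) {ω | s < V ω} ≤ ℙ {ω | s < W ω}) :
    (∫ ω, (max (V ω - δ) 0 - max (V ω - ε) 0)) ≤
      ∫ ω, (max (W ω - δ) 0 - max (W ω - ε) 0) := by
  have hr_iff : ∀ (t : ℝ), 0 < t → ∀ x : ℝ,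
      (t < max (x - δ) 0 - max (x - ε) 0) ↔ (δ + t < x ∧ t < ε - δ) := by
    intro t ht x
    rcases le_total x ε with hx | hx
    · rw [max_eq_right (by linarith : x - ε ≤ 0), sub_zero]
      constructor
      · intro h'
        rw [max_def] at h'
        split_ifs at h' <;> constructor <;> linarith
      · rintro ⟨h1, h2⟩
        rw [max_eq_left (by linarith : (0:ℝ) ≤ x - δ)]
        linarith
    · rw [max_eq_left (by linarith : (0:ℝ) ≤ x - δ),
        max_eq_left (by linarith : (0:ℝ) ≤ x - ε)]
      constructor
      · intro h'; exact ⟨by linarith, by linarith⟩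
      · rintro ⟨h1, h2⟩; linarith
  have hrle : ∀ x : ℝ, max (x - δ) 0 - max (x - ε) 0 ≤ ε - δ := by
    intro x
    have h1 : x - δ ≤ max (x - ε) 0 + (ε - δ) := by
      have := le_max_left (x - ε) (0:ℝ); linarith
    have h2 : (0:ℝ) ≤ max (x - ε) 0 + (ε - δ) := by
      have := le_max_right (x - ε) (0:ℝ); linarith
    have := max_le h1 h2
    linarith
  have hnn : ∀ (g : Ω → ℝ), 0 ≤ᵐ[(ℙ : Measure Ω)]
      fun ω => max (g ω - δ) 0 - max (g ω - ε) 0 := by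
    intro g
    filter_upwards with ω
    have : max (g ω - ε) 0 ≤ max (g ω - δ) 0 :=
      max_le_max (by linarith) le_rfl
    simp only [Pi.zero_apply]
    linarith
  have hint : ∀ (g : Ω → ℝ), Integrable g →
      Integrable (fun ω => max (g ω - δ) 0 - max (g ω - ε) 0) := by
    intro g hg
    exact ((hg.sub (integrable_const δ)).pos_part).sub
      ((hg.sub (integrable_const ε)).pos_part)
  rw [Integrable.integral_eq_integral_meas_lt (hint V hVi) (hnn V),
    Integrable.integral_eq_integral_meas_lt (hint W hWi) (hnn W)]
  have hWmeas : Measurable fun t : ℝ =>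
      ((ℙ : Measure Ω) {a | t < max (W a - δ) 0 - max (W a - ε) 0}).toReal := by
    refine Measurable.ennreal_toReal ?_
    exact Antitone.measurable (fun _ _ hst => measure_mono (fun _ h' => lt_of_le_of_lt hst h'))
  refine integral_mono_of_nonneg ?_ ?_ ?_
  · filter_upwards with t; exact ENNReal.toReal_nonneg
  · refine Integrable.mono' (g := Set.indicator (Set.Ioc 0 (ε - δ)) fun _ => (1:ℝ)) ?_
      hWmeas.aestronglyMeasurable ?_
    · refine Integrable.restrict ?_
      rw [integrable_indicator_iff measurableSet_Ioc]
      refine (integrableOn_const_iff (C := (1:ℝ))).mpr (Or.inr ?_)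
      rw [Real.volume_Ioc]
      exact ENNReal.ofReal_lt_top
    · filter_upwards [self_mem_ae_restrict measurableSet_Ioi] with t ht
      rcases lt_or_ge t (ε - δ) with h1 | h1
      · have hm : t ∈ Set.Ioc 0 (ε - δ) := ⟨ht, h1.le⟩
        rw [Set.indicator_of_mem hm]
        rw [Real.norm_eq_abs, abs_of_nonneg measureReal_nonneg]
        exact ENNReal.toReal_le_of_le_ofReal one_pos.le (by simpa using prob_le_one)
      · have hempty : {a | t < max (W a - δ) 0 - max (W a - ε) 0} = ∅ := by
          ext a
          simp only [Set.mem_setOf_eq, Set.mem_empty_iff_false, iff_false, not_lt]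
          exact le_trans (hrle (W a)) h1
        rw [hempty]
        simp only [measureReal_empty, norm_zero]
        exact Set.indicator_nonneg (fun _ _ => zero_le_one) t
  · filter_upwards [self_mem_ae_restrict measurableSet_Ioi] with t ht
    rcases lt_or_ge t (ε - δ) with h1 | h1
    · have hsetV : {a | t < max (V a - δ) 0 - max (V a - ε) 0} = {a | δ + t < V a} := by
        ext a; simp only [Set.mem_setOf_eq, hr_iff t ht (V a)]
        exact and_iff_left h1
      have hsetW : {a | t < max (W a - δ) 0 - max (W a - ε) 0} = {a | δ + t < W a} := by
        ext a; simp only [Set.mem_setOf_eq, hr_iff t ht (W a)]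
        exact and_iff_left h1
      rw [hsetV, hsetW]
      exact ENNReal.toReal_le_toReal (measure_ne_top _ _) (measure_ne_top _ _) |>.mpr
        (h (δ + t) (by linarith [Set.mem_Ioi.mp ht]) (by linarith))
    · have hempty : {a | t < max (V a - δ) 0 - max (V a - ε) 0} = ∅ := by
        ext a
        simp only [Set.mem_setOf_eq, Set.mem_empty_iff_false, iff_false, not_lt]
        exact le_trans (hrle (V a)) h1
      rw [hempty]
      simp

private lemma tail_mono {Ω : Type*} [MeasureSpace Ω]
    (hP : IsProbabilityMeasure (ℙ : Measure Ω))
    (V W : Ω → ℝ) (hVm : Measurable V) (hWm : Measurable W)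
    (FV FW : ℝ → ℝ)
    (hFV : ∀ x, FV x = cdf ((ℙ : Measure Ω).map V) x)
    (hFW : ∀ x, FW x = cdf ((ℙ : Measure Ω).map W) x)
    (s : ℝ) (hle : FW s ≤ FV s) :
    (ℙ : Measure Ω) {ω | s < V ω} ≤ ℙ {ω | s < W ω} := by
  have hVmap : IsProbabilityMeasure ((ℙ : Measure Ω).map V) :=
    Measure.isProbabilityMeasure_map hVm.aemeasurable
  have hWmap : IsProbabilityMeasure ((ℙ : Measure Ω).map W) :=
    Measure.isProbabilityMeasure_map hWm.aemeasurable
  have hVIic : ((ℙ : Measure Ω).map W) (Set.Iic s) ≤ ((ℙ : Measure Ω).map V) (Set.Iic s) := by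
    rw [hFV, hFW, cdf_eq_real, cdf_eq_real, measureReal_def, measureReal_def] at hle
    exact (ENNReal.toReal_le_toReal (measure_ne_top _ _) (measure_ne_top _ _)).mp hle
  have hV : (ℙ : Measure Ω) {ω | s < V ω} = ((ℙ : Measure Ω).map V) (Set.Ioi s) := by
    rw [Measure.map_apply hVm measurableSet_Ioi]; rfl
  have hW : (ℙ : Measure Ω) {ω | s < W ω} = ((ℙ : Measure Ω).map W) (Set.Ioi s) := by
    rw [Measure.map_apply hWm measurableSet_Ioi]; rfl
  rw [hV, hW]
  have h1 : ∀ (μ : Measure ℝ) [IsProbabilityMeasure μ],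
      μ (Set.Ioi s) = 1 - μ (Set.Iic s) := by
    intro μ _
    rw [← Set.compl_Iic, measure_compl measurableSet_Iic (measure_ne_top _ _), measure_univ]
  rw [h1, h1]
  exact tsub_le_tsub_left hVIic 1

/-- If `X ≼_cx Y ≼_cx Z` have strictly increasing continuous cdfs with
unique crossing points `d_XY` of `(F_X, F_Y)` and `d_YZ` of `(F_Y, F_Z)`, and
`δ < ε ≤ min {d_XY, d_YZ}`, then `E[r(Z)] ≤ E[r(Y)] ≤ E[r(X)]` for
`r(x) = (x-δ)₊ - (x-ε)₊`. -/
theorem payoff_order_below_crossings {Ω : Type*} [MeasureSpace Ω]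
    (hP : IsProbabilityMeasure (ℙ : Measure Ω))
    (X Y Z : Ω → ℝ) (hXm : Measurable X) (hYm : Measurable Y) (hZm : Measurable Z)
    (hXi : Integrable X) (hYi : Integrable Y) (hZi : Integrable Z)
    (FX FY FZ : ℝ → ℝ)
    (hFX : ∀ x, FX x = cdf ((ℙ : Measure Ω).map X) x)
    (hFY : ∀ x, FY x = cdf ((ℙ : Measure Ω).map Y) x)
    (hFZ : ∀ x, FZ x = cdf ((ℙ : Measure Ω).map Z) x)
    (hXs : StrictMono FX) (hXc : Continuous FX)
    (hYs : StrictMono FY) (hYc : Continuous FY)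
    (hZs : StrictMono FZ) (hZc : Continuous FZ)
    (hmeanXY : (∫ ω, X ω) = ∫ ω, Y ω)
    (hslXY : ∀ x : ℝ, (∫ ω, max (X ω - x) 0) ≤ ∫ ω, max (Y ω - x) 0)
    (hmeanYZ : (∫ ω, Y ω) = ∫ ω, Z ω)
    (hslYZ : ∀ x : ℝ, (∫ ω, max (Y ω - x) 0) ≤ ∫ ω, max (Z ω - x) 0)
    (dXY dYZ : ℝ)
    (hXY : IsCrossPt FX FY dXY ∧ ∀ d', IsCrossPt FX FY d' → d' = dXY)
    (hYZ : IsCrossPt FY FZ dYZ ∧ ∀ d', IsCrossPt FY FZ d' → d' = dYZ)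
    (δ ε : ℝ) (hδε : δ < ε) (hε : ε ≤ min dXY dYZ) :
    (∫ ω, (max (Z ω - δ) 0 - max (Z ω - ε) 0)) ≤
        (∫ ω, (max (Y ω - δ) 0 - max (Y ω - ε) 0)) ∧
      (∫ ω, (max (Y ω - δ) 0 - max (Y ω - ε) 0)) ≤
        ∫ ω, (max (X ω - δ) 0 - max (X ω - ε) 0) := by
  constructor
  · refine payoff_le_aux hP Z Y hZi hYi δ ε hδε ?_
    intro s hδs hsε
    refine tail_mono hP Z Y hZm hYm FZ FY hFZ hFY s ?_
    exact hYZ.1.1 s (le_trans hsε (le_trans hε (min_le_right _ _)))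
  · refine payoff_le_aux hP Y X hYi hXi δ ε hδε ?_
    intro s hδs hsε
    refine tail_mono hP Y X hYm hXm FY FX hFY hFX s ?_
    exact hXY.1.1 s (le_trans hsε (le_trans hε (min_le_left _ _)))
end
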